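/- Let m be a positive integer. Every 2×2 integer matrix with determinant m is equal to γ * ((a, b), (0, d)) for some γ ∈ SL(2,ℤ) and unique integers a, b, d with a*d = m, d > 0, and 0 ≤ b < d. -/

import Mathlib

private lemma entries_of_eq {a b c d e f g' h' : ℤ}
    (h : (!![a,b;c,d] : Matrix (Fin 2) (Fin 2) ℤ) = !![e,f;g',h']) :
    a = e ∧ b = f ∧ c = g' ∧ d = h' := by
  rw [← Matrix.ext_iff] at h
  have h00 := h 0 0; have h01 := h 0 1; have h10 := h 1 0; have h11 := h 1 1
  simp at h00 h01 h10 h11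
  exact ⟨h00, h01, h10, h11⟩

private lemma triangular_uniq {m a1 b1 d1 a2 b2 d2 : ℤ} (hm : 0 < m)
    (h1 : a1 * d1 = m) (hd1 : 0 < d1) (hb1 : 0 ≤ b1) (hb1' : b1 < d1)
    (h2 : a2 * d2 = m) (hd2 : 0 < d2) (hb2 : 0 ≤ b2) (hb2' : b2 < d2)
    (γ : Matrix.SpecialLinearGroup (Fin 2) ℤ)
    (h : (γ : Matrix (Fin 2) (Fin 2) ℤ) * !![a1, b1; 0, d1] = !![a2, b2; 0, d2]) :
    a1 = a2 ∧ b1 = b2 ∧ d1 = d2 := by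
  obtain ⟨M, hM⟩ := γ
  have hMeta : M = !![M 0 0, M 0 1; M 1 0, M 1 1] := Matrix.eta_fin_two M
  rw [Matrix.det_fin_two] at hM
  have h' : M * !![a1, b1; 0, d1] = !![a2, b2; 0, d2] := h
  rw [hMeta, Matrix.mul_fin_two] at h'
  obtain ⟨e00, e01, e10, e11⟩ := entries_of_eq h'
  simp only [mul_zero, add_zero, zero_mul, zero_add] at e00 e01 e10 e11
  have ha1 : a1 ≠ 0 := by rintro rfl; rw [zero_mul] at h1; omega
  have hr : M 1 0 = 0 := by
    rcases mul_eq_zero.1 e10 with h'' | h''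
    · exact h''
    · exact absurd h'' ha1
  rw [hr] at hM e11
  simp only [mul_zero, zero_mul, sub_zero, zero_add] at hM e11
  have hs1 : M 1 1 = 1 := by
    rcases Int.isUnit_iff.1 (IsUnit.of_mul_eq_one (a := M 1 1) (M 0 0)
        (by linarith [mul_comm (M 0 0) (M 1 1)])) with h'' | h''
    · exact h''
    · exfalso; rw [h''] at e11; omega
  have hp1 : M 0 0 = 1 := by rw [hs1, mul_one] at hM; exact hM
  rw [hs1, one_mul] at e11
  rw [hp1, one_mul] at e00 e01
  have hq : M 0 1 = 0 := by
    by_contra hq0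
    rcases lt_or_gt_of_ne hq0 with h'' | h''
    · nlinarith
    · nlinarith
  rw [hq, zero_mul, add_zero] at e01
  exact ⟨e00, e01, e11⟩

/-- Every 2×2 integer matrix of determinant m > 0 equals γ β_{a,b,d} with γ ∈ SL(2,ℤ)
and unique (a, b, d) with ad = m, d > 0, 0 ≤ b < d. -/
theorem coset_representatives (m : ℤ) (hm : 0 < m) (A : Matrix (Fin 2) (Fin 2) ℤ)
    (hA : A.det = m) :
    ∃! t : ℤ × ℤ × ℤ,
      t.1 * t.2.2 = m ∧ 0 < t.2.2 ∧ 0 ≤ t.2.1 ∧ t.2.1 < t.2.2 ∧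
      ∃ γ : Matrix.SpecialLinearGroup (Fin 2) ℤ,
        A = (γ : Matrix (Fin 2) (Fin 2) ℤ) * !![t.1, t.2.1; 0, t.2.2] := by
  set a := A 0 0 with ha_def
  set b := A 0 1 with hb_def
  set c := A 1 0 with hc_def
  set dd := A 1 1 with hd_def
  have hAeta : A = !![a, b; c, dd] := Matrix.eta_fin_two A
  have hdet : a * dd - b * c = m := by rw [← hA, Matrix.det_fin_two]
  set g : ℤ := (Int.gcd a c : ℤ) with hg_def
  have hg0 : 0 < g := by
    have hor : a ≠ 0 ∨ c ≠ 0 := by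
      by_contra h'
      push_neg at h'
      rw [h'.1, h'.2] at hdet
      simp at hdet; omega
    rw [hg_def]
    exact_mod_cast Int.gcd_pos_iff.mpr hor
  have hgne : g ≠ 0 := ne_of_gt hg0
  obtain ⟨a', ha'⟩ : g ∣ a := Int.gcd_dvd_left a c
  obtain ⟨c', hc'⟩ : g ∣ c := Int.gcd_dvd_right a c
  set u := Int.gcdA a c with hu_def
  set v := Int.gcdB a c with hv_def
  have hbez : g = a * u + c * v := Int.gcd_eq_gcd_ab a c
  have hdet1 : u * a' + v * c' = 1 := by
    have h2 : g * (u * a' + v * c') = g * 1 := by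
      rw [mul_one]
      calc g * (u * a' + v * c') = a * u + c * v := by rw [ha', hc']; ring
        _ = g := hbez.symm
    exact mul_left_cancel₀ hgne h2
  set M : Matrix (Fin 2) (Fin 2) ℤ := !![u, v; -c', a'] with hM_def
  have hMdet : M.det = 1 := by
    rw [hM_def, Matrix.det_fin_two_of]; linarith
  set b0 : ℤ := u * b + v * dd with hb0_def
  set d0 : ℤ := -c' * b + a' * dd with hd0_def
  have hMA : M * A = !![g, b0; 0, d0] := by
    rw [hAeta, hM_def, Matrix.mul_fin_two]
    have e1 : u * a + v * c = g := by rw [ha', hc']; nlinarith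
    have e2 : -c' * a + a' * c = 0 := by rw [ha', hc']; ring
    rw [e1, e2, ← hb0_def, ← hd0_def]
  have hgd0 : g * d0 = m := by
    have h2 : (M * A).det = m := by rw [Matrix.det_mul, hMdet, one_mul, hA]
    rw [hMA, Matrix.det_fin_two_of] at h2; linarith
  have hd0pos : 0 < d0 := by nlinarith
  set q0 : ℤ := b0 / d0 with hq0_def
  set r0 : ℤ := b0 % d0 with hr0_def
  have hr0nn : 0 ≤ r0 := Int.emod_nonneg b0 (ne_of_gt hd0pos)
  have hr0lt : r0 < d0 := Int.emod_lt_of_pos b0 hd0pos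
  set N : Matrix (Fin 2) (Fin 2) ℤ := !![1, -q0; 0, 1] with hN_def
  have hNdet : N.det = 1 := by rw [hN_def, Matrix.det_fin_two_of]; ring
  have hNMA : N * !![g, b0; 0, d0] = !![g, r0; 0, d0] := by
    rw [hN_def, Matrix.mul_fin_two]
    rw [show (1:ℤ) * g + -q0 * 0 = g by ring,
        show (1:ℤ) * b0 + -q0 * d0 = r0 by rw [hr0_def, Int.emod_def]; ring,
        show (0:ℤ) * g + 1 * 0 = 0 by ring,
        show (0:ℤ) * b0 + 1 * d0 = d0 by ring]
  set γM : Matrix.SpecialLinearGroup (Fin 2) ℤ := ⟨M, hMdet⟩ with hγM_def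
  set γN : Matrix.SpecialLinearGroup (Fin 2) ℤ := ⟨N, hNdet⟩ with hγN_def
  set γ : Matrix.SpecialLinearGroup (Fin 2) ℤ := (γN * γM)⁻¹ with hγ_def
  have hcoe : ((γN * γM : Matrix.SpecialLinearGroup (Fin 2) ℤ) : Matrix (Fin 2) (Fin 2) ℤ) * A
      = !![g, r0; 0, d0] := by
    show N * M * A = !![g, r0; 0, d0]
    rw [mul_assoc, hMA, hNMA]
  have hAeq : A = (γ : Matrix (Fin 2) (Fin 2) ℤ) * !![g, r0; 0, d0] := by
    calc A = (((γN * γM)⁻¹ : Matrix.SpecialLinearGroup (Fin 2) ℤ) : Matrix (Fin 2) (Fin 2) ℤ)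
            * (((γN * γM : Matrix.SpecialLinearGroup (Fin 2) ℤ) : Matrix (Fin 2) (Fin 2) ℤ) * A) := by
          rw [← mul_assoc, ← Matrix.SpecialLinearGroup.coe_mul, inv_mul_cancel,
            Matrix.SpecialLinearGroup.coe_one, one_mul]
      _ = (γ : Matrix (Fin 2) (Fin 2) ℤ) * !![g, r0; 0, d0] := by rw [hcoe, hγ_def]
  refine ⟨(g, r0, d0), ⟨hgd0, hd0pos, hr0nn, hr0lt, γ, hAeq⟩, ?_⟩
  rintro ⟨a2, b2, d2⟩ ⟨hm2, hd2, hb2, hb2', γ2, hA2⟩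
  simp only at hm2 hd2 hb2 hb2' hA2 ⊢
  have key : ((γ⁻¹ * γ2 : Matrix.SpecialLinearGroup (Fin 2) ℤ) : Matrix (Fin 2) (Fin 2) ℤ)
      * !![a2, b2; 0, d2] = !![g, r0; 0, d0] := by
    rw [Matrix.SpecialLinearGroup.coe_mul, mul_assoc, ← hA2, hAeq, ← mul_assoc,
      ← Matrix.SpecialLinearGroup.coe_mul, inv_mul_cancel, Matrix.SpecialLinearGroup.coe_one,
      one_mul]
  obtain ⟨e1, e2, e3⟩ := triangular_uniq hm hm2 hd2 hb2 hb2' hgd0 hd0pos hr0nn hr0lt _ key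
  exact Prod.ext e1 (Prod.ext e2 e3)
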